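/- Goal-test correctness: let Φ_G be a propositional formula over {z_f} and G = {z : State | B(z) ⊨ Φ_G}. Then the planning problem has a solution (some reachable state satisfies Φ_G) if and only if there exists i ≤ 2^n − 1 such that the formula Z_i ∧ Φ_G is satisfiable, where Z_i is the formula representing the set of states reachable in at most i steps. -/
import Mathlib

open Classical in
theorem goal_test_correct
    (Fluent : Type) [Fintype Fluent] [DecidableEq Fluent] (n : ℕ)
    (hn : Fintype.card Fluent = n)
    (T : Finset Fluent → Finset Fluent → Prop) (hrefl : ∀ z, T z z)
    (z_init : Finset Fluent)
    (ΦG : (Fluent → Bool) → Prop)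
    (R : ℕ → Set (Finset Fluent))
    (hR0 : R 0 = {z_init})
    (hRs : ∀ i, R (i + 1) = {z' | ∃ z ∈ R i, T z z'})
    (ZF : ℕ → (Fluent → Bool) → Prop)
    (hrep : ∀ i (z : Finset Fluent), ZF i (fun f => decide (f ∈ z)) ↔ z ∈ R i) :
    (∃ z : Finset Fluent, Relation.ReflTransGen T z_init z ∧ ΦG (fun f => decide (f ∈ z)))
      ↔ ∃ i ≤ 2 ^ n - 1, ∃ v : Fluent → Bool, ZF i v ∧ ΦG v := by
  classical
  -- R is increasing
  have hsub : ∀ i, R i ⊆ R (i + 1) := by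
    intro i z hz
    rw [hRs]
    exact ⟨z, hz, hrefl z⟩
  have hmono : ∀ i j, i ≤ j → R i ⊆ R j := by
    intro i j hij
    induction j with
    | zero => simp_all
    | succ j ih =>
      rcases Nat.lt_or_ge i (j+1) with h | h
      · exact (ih (Nat.lt_succ_iff.mp h)).trans (hsub j)
      · have : i = j + 1 := le_antisymm hij h
        subst this; exact subset_rfl
  -- stabilization
  have hstab : ∀ i, R i = R (i+1) → ∀ j, i ≤ j → R j = R i := by
    intro i hi j hij
    induction j with
    | zero => simp_all
    | succ j ih =>
      rcases Nat.lt_or_ge i (j+1) with h | h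
      · have hji := Nat.lt_succ_iff.mp h
        have hRj := ih hji
        rw [hRs, hRj, ← hRs, ← hi]
      · have : i = j + 1 := le_antisymm hij h
        subst this; rfl
  -- find a fixed point index ≤ 2^n - 1
  have hcard : ∀ m, (∀ i < m, R i ≠ R (i+1)) → m + 1 ≤ (R m).toFinset.card := by
    intro m
    induction m with
    | zero =>
      intro _
      have : z_init ∈ (R 0).toFinset := by simp [hR0]
      exact Finset.card_pos.mpr ⟨z_init, this⟩
    | succ m ih =>
      intro h
      have h1 : m + 1 ≤ (R m).toFinset.card := ih fun i hi => h i (hi.trans (Nat.lt_succ_self m))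
      have hne : R m ≠ R (m+1) := h m (Nat.lt_succ_self m)
      have hss : (R m).toFinset ⊂ (R (m+1)).toFinset := by
        rw [Set.toFinset_ssubset_toFinset]
        exact (Set.ssubset_iff_of_subset (hsub m)).mpr
          (by rcases Set.exists_of_ssubset (lt_of_le_of_ne (hsub m) hne) with ⟨x, hx1, hx2⟩
              exact ⟨x, hx1, hx2⟩)
      have := Finset.card_lt_card hss
      omega
  have htot : Fintype.card (Finset Fluent) = 2 ^ n := by
    simp [Fintype.card_finset, hn]
  have hfix : ∃ i ≤ 2 ^ n - 1, R i = R (i+1) := by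
    by_contra hc
    push_neg at hc
    have : ∀ i < 2 ^ n, R i ≠ R (i+1) := by
      intro i hi
      exact hc i (by omega)
    have h1 := hcard (2 ^ n) this
    have h2 : (R (2 ^ n)).toFinset.card ≤ Fintype.card (Finset Fluent) :=
      Finset.card_le_card (Finset.subset_univ _)
    omega
  obtain ⟨N, hN, hNfix⟩ := hfix
  -- reachability ↔ ∃ k, z ∈ R k
  have hreach : ∀ z, Relation.ReflTransGen T z_init z ↔ ∃ k, z ∈ R k := by
    intro z
    constructor
    · intro h
      induction h with
      | refl => exact ⟨0, by simp [hR0]⟩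
      | tail _ hT ih =>
        obtain ⟨k, hk⟩ := ih
        exact ⟨k + 1, by rw [hRs]; exact ⟨_, hk, hT⟩⟩
    · rintro ⟨k, hk⟩
      induction k generalizing z with
      | zero =>
        rw [hR0, Set.mem_singleton_iff] at hk
        subst hk
        exact Relation.ReflTransGen.refl
      | succ k ih =>
        rw [hRs] at hk
        obtain ⟨w, hw, hT⟩ := hk
        exact Relation.ReflTransGen.tail (ih w hw) hT
  constructor
  · rintro ⟨z, hz, hG⟩
    obtain ⟨k, hk⟩ := (hreach z).mp hz
    have hzN : z ∈ R N := by
      rcases le_or_gt k N with h | h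
      · exact hmono k N h hk
      · rw [hstab N hNfix k h.le] at hk; exact hk
    exact ⟨N, hN, _, (hrep N z).mpr hzN, hG⟩
  · rintro ⟨i, _, v, hZ, hG⟩
    set z : Finset Fluent := Finset.univ.filter (fun f => v f = true) with hzdef
    have hv : (fun f => decide (f ∈ z)) = v := by
      funext f
      simp [hzdef]
    have hzR : z ∈ R i := (hrep i z).mp (by rw [hv]; exact hZ)
    exact ⟨z, (hreach z).mpr ⟨i, hzR⟩, by rw [hv]; exact hG⟩
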